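/- Let X be a coherent configuration of degree n, maximal valency k, and indistinguishing number c satisfying n > 3·c·k·(k-1), and fix a point μ. Then for any subset Δ of points with |Δ| ≤ 6, there exists a point λ such that for every δ ∈ Δ, the intersection number c_{xr}^y equals 1, where x = r(μ,δ), y = r(μ,λ), r = r(δ,λ). -/
import Mathlib


open Finset

structure CoherentConfiguration (Ω : Type*) [Fintype Ω] [DecidableEq Ω] where
  S : Set (Finset (Ω × Ω))
  nonempty_mem : ∀ s ∈ S, s.Nonempty
  cover : ∀ p : Ω × Ω, ∃ s ∈ S, p ∈ s
  pairwise_disjoint : ∀ s ∈ S, ∀ t ∈ S, s ≠ t → ∀ p : Ω × Ω, p ∈ s → p ∉ t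
  diag_union : ∀ s ∈ S, ∀ p ∈ s, p.1 = p.2 → ∀ q ∈ s, q.1 = q.2
  conv_mem : ∀ s ∈ S, s.image (fun p => (p.2, p.1)) ∈ S
  inter_const : ∀ r ∈ S, ∀ s ∈ S, ∀ t ∈ S, ∀ p ∈ t, ∀ q ∈ t,
    (Finset.univ.filter fun γ => (p.1, γ) ∈ r ∧ (γ, p.2) ∈ s).card =
    (Finset.univ.filter fun γ => (q.1, γ) ∈ r ∧ (γ, q.2) ∈ s).card

namespace CoherentConfiguration

variable {Ω : Type*} [Fintype Ω] [DecidableEq Ω]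
variable {Ω' : Type*} [Fintype Ω'] [DecidableEq Ω']

/-- The converse relation `r*`. -/
def conv (r : Finset (Ω × Ω)) : Finset (Ω × Ω) := r.image fun p => (p.2, p.1)

/-- The intersection number `c_{rs}^t`, computed at a chosen pair of `t`. -/
noncomputable def interNum (r s t : Finset (Ω × Ω)) : ℕ :=
  if h : t.Nonempty then
    (Finset.univ.filter fun γ => (h.choose.1, γ) ∈ r ∧ (γ, h.choose.2) ∈ s).card
  else 0

/-- The valency `n_s`, computed at a chosen point in the domain of `s`. -/
noncomputable def valency (s : Finset (Ω × Ω)) : ℕ :=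
  if h : s.Nonempty then (Finset.univ.filter fun β : Ω => (h.choose.1, β) ∈ s).card
  else 0

/-- The complex product `rs`: the set of basis relations `t` with `c_{rs}^t ≠ 0`. -/
def cprod (C : CoherentConfiguration Ω) (r s : Finset (Ω × Ω)) : Set (Finset (Ω × Ω)) :=
  {t | t ∈ C.S ∧ interNum r s t ≠ 0}

/-- The maximal valency of a coherent configuration. -/
noncomputable def maxValency (C : CoherentConfiguration Ω) : ℕ :=
  sSup {n | ∃ s ∈ C.S, n = valency s}

/-- The set `c(α,β) = {γ : r(γ,α) = r(γ,β)}`. -/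
def indisSet (C : CoherentConfiguration Ω) (α β : Ω) : Set Ω :=
  {γ | ∀ s ∈ C.S, ((γ, α) ∈ s ↔ (γ, β) ∈ s)}

/-- The indistinguishing number of a coherent configuration. -/
noncomputable def indisNum (C : CoherentConfiguration Ω) : ℕ :=
  sSup {n | ∃ α β : Ω, α ≠ β ∧ n = (C.indisSet α β).ncard}

/-- The (a) basis relation containing the pair `(α,β)`. -/
noncomputable def rel (C : CoherentConfiguration Ω) (α β : Ω) : Finset (Ω × Ω) :=
  (C.cover (α, β)).choose

/-- `D` is a fission of `C`: every basis relation of `C` is a union of basis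
relations of `D`. -/
def IsFission (C D : CoherentConfiguration Ω) : Prop :=
  ∀ s ∈ C.S, ∃ T ⊆ D.S, (s : Set (Ω × Ω)) = ⋃ t ∈ T, (t : Set (Ω × Ω))

/-- `φ` is an algebraic isomorphism from `C` onto `C'`. -/
def IsAlgIso (C : CoherentConfiguration Ω) (C' : CoherentConfiguration Ω')
    (φ : Finset (Ω × Ω) → Finset (Ω' × Ω')) : Prop :=
  Set.BijOn φ C.S C'.S ∧
  ∀ r ∈ C.S, ∀ s ∈ C.S, ∀ t ∈ C.S, interNum r s t = interNum (φ r) (φ s) (φ t)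

end CoherentConfiguration

open CoherentConfiguration

section Aux

variable {Ω : Type*} [Fintype Ω] [DecidableEq Ω] (C : CoherentConfiguration Ω)

lemma rel_mem_S (α β : Ω) : C.rel α β ∈ C.S := (C.cover (α, β)).choose_spec.1

lemma mem_rel (α β : Ω) : (α, β) ∈ C.rel α β := (C.cover (α, β)).choose_spec.2

lemma eq_of_mem_mem {s t : Finset (Ω × Ω)} (hs : s ∈ C.S) (ht : t ∈ C.S)
    {p : Ω × Ω} (hps : p ∈ s) (hpt : p ∈ t) : s = t := by
  by_contra hne
  exact C.pairwise_disjoint s hs t ht hne p hps hpt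

lemma conv_mem_S {r : Finset (Ω × Ω)} (hr : r ∈ C.S) : conv r ∈ C.S := C.conv_mem r hr

lemma mem_conv {r : Finset (Ω × Ω)} {a b : Ω} (h : (a, b) ∈ r) : (b, a) ∈ conv r :=
  Finset.mem_image.mpr ⟨(a, b), h, rfl⟩

lemma count_eq_valency {x : Finset (Ω × Ω)} (hx : x ∈ C.S) {α β : Ω} (hαβ : (α, β) ∈ x) :
    (Finset.univ.filter fun γ => (α, γ) ∈ x).card = valency x := by
  have hne : x.Nonempty := ⟨_, hαβ⟩
  rw [valency, dif_pos hne]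
  have h₀ : (hne.choose.1, hne.choose.2) ∈ x := by
    have := hne.choose_spec; rwa [Prod.mk.eta]
  have he : C.rel α α ∈ C.S := rel_mem_S C α α
  have heα : (α, α) ∈ C.rel α α := mem_rel C α α
  have h1 := C.inter_const (C.rel α α) he x hx x hx (α, β) hαβ
    (hne.choose.1, hne.choose.2) h₀
  have hL : 0 < (Finset.univ.filter fun γ => ((α, β).1, γ) ∈ C.rel α α ∧ (γ, (α, β).2) ∈ x).card := by
    refine Finset.card_pos.mpr ⟨α, ?_⟩
    simp only [Finset.mem_filter, Finset.mem_univ, true_and]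
    exact ⟨heα, hαβ⟩
  rw [h1] at hL
  obtain ⟨γ, hγ⟩ := Finset.card_pos.mp hL
  simp only [Finset.mem_filter, Finset.mem_univ, true_and] at hγ
  obtain ⟨hγ1, hγ2⟩ := hγ
  have hdg : hne.choose.1 = γ :=
    C.diag_union (C.rel α α) he (α, α) heα rfl (hne.choose.1, γ) hγ1
  rw [← hdg] at hγ1
  have h2 := C.inter_const x hx (conv x) (conv_mem_S C hx) (C.rel α α) he
    (α, α) heα (hne.choose.1, hne.choose.1) hγ1
  have key : ∀ a : Ω, (Finset.univ.filter fun γ => (a, γ) ∈ x ∧ (γ, a) ∈ conv x)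
      = Finset.univ.filter fun γ => (a, γ) ∈ x := by
    intro a
    apply Finset.filter_congr
    intro γ _
    exact ⟨fun hh => hh.1, fun hh => ⟨hh, mem_conv hh⟩⟩
  have h2' : (Finset.univ.filter fun γ => (α, γ) ∈ x ∧ (γ, α) ∈ conv x).card
      = (Finset.univ.filter fun γ => (hne.choose.1, γ) ∈ x ∧ (γ, hne.choose.1) ∈ conv x).card := h2
  rw [key, key] at h2'
  exact h2'

lemma interNum_eq_card {x r y : Finset (Ω × Ω)} (hx : x ∈ C.S) (hr : r ∈ C.S)
    (hy : y ∈ C.S) {a b : Ω} (hab : (a, b) ∈ y) :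
    interNum x r y = (Finset.univ.filter fun γ => (a, γ) ∈ x ∧ (γ, b) ∈ r).card := by
  have hne : y.Nonempty := ⟨_, hab⟩
  rw [interNum, dif_pos hne]
  exact C.inter_const x hx r hr y hy hne.choose hne.choose_spec (a, b) hab

lemma valency_le_maxValency {s : Finset (Ω × Ω)} (hs : s ∈ C.S) :
    valency s ≤ C.maxValency := by
  apply le_csSup
  · refine ⟨Fintype.card Ω, ?_⟩
    rintro n ⟨t, ht, rfl⟩
    rw [valency]
    split
    · exact le_trans (Finset.card_filter_le _ _) (le_of_eq Finset.card_univ)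
    · exact Nat.zero_le _
  · exact ⟨s, hs, rfl⟩

lemma ncard_indisSet_le {α β : Ω} (hne : α ≠ β) :
    (C.indisSet α β).ncard ≤ C.indisNum := by
  apply le_csSup
  · refine ⟨Fintype.card Ω, ?_⟩
    rintro n ⟨a, b, hab, rfl⟩
    calc (C.indisSet a b).ncard ≤ (Set.univ : Set Ω).ncard :=
          Set.ncard_le_ncard (Set.subset_univ _) Set.finite_univ
      _ = Fintype.card Ω := by rw [Set.ncard_univ, Nat.card_eq_fintype_card]
  · exact ⟨α, β, hne, rfl⟩

lemma mem_indisSet_of {r : Finset (Ω × Ω)} (hr : r ∈ C.S) {γ δ l : Ω}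
    (h1 : (γ, l) ∈ r) (h2 : (δ, l) ∈ r) : l ∈ C.indisSet γ δ := by
  intro s hs
  constructor
  · intro hm
    have hs' : s = conv r := eq_of_mem_mem C hs (conv_mem_S C hr) hm (mem_conv h1)
    rw [hs']; exact mem_conv h2
  · intro hm
    have hs' : s = conv r := eq_of_mem_mem C hs (conv_mem_S C hr) hm (mem_conv h2)
    rw [hs']; exact mem_conv h1

end Aux

theorem exists_good_point {Ω : Type*} [Fintype Ω] [DecidableEq Ω]
    (C : CoherentConfiguration Ω)
    (h : Fintype.card Ω > 3 * C.indisNum * C.maxValency * (C.maxValency - 1))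
    (μ : Ω) (Δ : Finset Ω) (hΔ : Δ.card ≤ 6) :
    ∃ l : Ω, ∀ δ ∈ Δ, interNum (C.rel μ δ) (C.rel δ l) (C.rel μ l) = 1 := by
  classical
  set c := C.indisNum with hc
  set k := C.maxValency with hk
  set Bad : Finset Ω := Δ.biUnion (fun δ =>
    (Finset.univ.filter fun γ => γ ≠ δ ∧ (μ, γ) ∈ C.rel μ δ).biUnion
      (fun γ => (C.indisSet γ δ).toFinite.toFinset)) with hBadDef
  -- per-δ bound
  have hper : ∀ δ : Ω,
      ((Finset.univ.filter fun γ => γ ≠ δ ∧ (μ, γ) ∈ C.rel μ δ).biUnion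
        (fun γ => (C.indisSet γ δ).toFinite.toFinset)).card ≤ (k - 1) * c := by
    intro δ
    have hGsub : (Finset.univ.filter fun γ => γ ≠ δ ∧ (μ, γ) ∈ C.rel μ δ)
        ⊆ (Finset.univ.filter fun γ => (μ, γ) ∈ C.rel μ δ).erase δ := by
      intro γ hγ
      simp only [Finset.mem_filter, Finset.mem_univ, true_and] at hγ
      simp only [Finset.mem_erase, Finset.mem_filter, Finset.mem_univ, true_and]
      exact ⟨hγ.1, hγ.2⟩
    have hδmem : δ ∈ Finset.univ.filter fun γ => (μ, γ) ∈ C.rel μ δ := by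
      simp only [Finset.mem_filter, Finset.mem_univ, true_and]
      exact mem_rel C μ δ
    have hGcard : (Finset.univ.filter fun γ => γ ≠ δ ∧ (μ, γ) ∈ C.rel μ δ).card ≤ k - 1 := by
      calc (Finset.univ.filter fun γ => γ ≠ δ ∧ (μ, γ) ∈ C.rel μ δ).card
          ≤ ((Finset.univ.filter fun γ => (μ, γ) ∈ C.rel μ δ).erase δ).card :=
            Finset.card_le_card hGsub
        _ = (Finset.univ.filter fun γ => (μ, γ) ∈ C.rel μ δ).card - 1 :=
            Finset.card_erase_of_mem hδmem
        _ = valency (C.rel μ δ) - 1 := by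
            rw [count_eq_valency C (rel_mem_S C μ δ) (mem_rel C μ δ)]
        _ ≤ k - 1 :=
            Nat.sub_le_sub_right (valency_le_maxValency C (rel_mem_S C μ δ)) 1
    calc ((Finset.univ.filter fun γ => γ ≠ δ ∧ (μ, γ) ∈ C.rel μ δ).biUnion
          (fun γ => (C.indisSet γ δ).toFinite.toFinset)).card
        ≤ ∑ γ ∈ (Finset.univ.filter fun γ => γ ≠ δ ∧ (μ, γ) ∈ C.rel μ δ),
            ((C.indisSet γ δ).toFinite.toFinset).card := Finset.card_biUnion_le
      _ ≤ ∑ γ ∈ (Finset.univ.filter fun γ => γ ≠ δ ∧ (μ, γ) ∈ C.rel μ δ), c := by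
          refine Finset.sum_le_sum fun γ hγ => ?_
          simp only [Finset.mem_filter, Finset.mem_univ, true_and] at hγ
          rw [← Set.ncard_eq_toFinset_card (C.indisSet γ δ) (Set.toFinite _)]
          exact ncard_indisSet_le C hγ.1
      _ = (Finset.univ.filter fun γ => γ ≠ δ ∧ (μ, γ) ∈ C.rel μ δ).card * c := by
          rw [Finset.sum_const, smul_eq_mul]
      _ ≤ (k - 1) * c := Nat.mul_le_mul_right c hGcard
  have hcard : Bad.card ≤ 6 * ((k - 1) * c) := by
    calc Bad.card ≤ ∑ δ ∈ Δ, ((Finset.univ.filter fun γ => γ ≠ δ ∧ (μ, γ) ∈ C.rel μ δ).biUnion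
          (fun γ => (C.indisSet γ δ).toFinite.toFinset)).card := Finset.card_biUnion_le
      _ ≤ ∑ _δ ∈ Δ, ((k - 1) * c) := Finset.sum_le_sum fun δ _ => hper δ
      _ = Δ.card * ((k - 1) * c) := by rw [Finset.sum_const, smul_eq_mul]
      _ ≤ 6 * ((k - 1) * c) := Nat.mul_le_mul_right _ hΔ
  have h6 : 6 * ((k - 1) * c) ≤ 3 * c * k * (k - 1) := by
    rcases Nat.lt_or_ge k 2 with hk2 | hk2
    · interval_cases k <;> simp
    · calc 6 * ((k - 1) * c) ≤ (3 * k) * ((k - 1) * c) :=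
            Nat.mul_le_mul_right _ (by omega)
        _ = 3 * c * k * (k - 1) := by ring
  have hlt : Bad.card < Fintype.card Ω := lt_of_le_of_lt (le_trans hcard h6) h
  have hex : ∃ l : Ω, l ∉ Bad := by
    by_contra hcon
    push_neg at hcon
    have : (Finset.univ : Finset Ω).card ≤ Bad.card :=
      Finset.card_le_card fun x _ => hcon x
    rw [Finset.card_univ] at this
    omega
  obtain ⟨l, hl⟩ := hex
  refine ⟨l, fun δ hδ => ?_⟩
  rw [interNum_eq_card C (rel_mem_S C μ δ) (rel_mem_S C δ l) (rel_mem_S C μ l)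
    (mem_rel C μ l)]
  have hsingle : (Finset.univ.filter fun γ => (μ, γ) ∈ C.rel μ δ ∧ (γ, l) ∈ C.rel δ l)
      = {δ} := by
    ext γ
    simp only [Finset.mem_filter, Finset.mem_univ, true_and, Finset.mem_singleton]
    constructor
    · rintro ⟨hγx, hγr⟩
      by_contra hne
      have hind : l ∈ C.indisSet γ δ :=
        mem_indisSet_of C (rel_mem_S C δ l) hγr (mem_rel C δ l)
      have : l ∈ Bad := by
        refine Finset.mem_biUnion.mpr ⟨δ, hδ, Finset.mem_biUnion.mpr ⟨γ, ?_, ?_⟩⟩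
        · simp only [Finset.mem_filter, Finset.mem_univ, true_and]
          exact ⟨hne, hγx⟩
        · exact (Set.toFinite _).mem_toFinset.mpr hind
      exact hl this
    · intro hγd
      rw [hγd]
      exact ⟨mem_rel C μ δ, mem_rel C δ l⟩
  rw [hsingle, Finset.card_singleton]
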